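/- For every integer k ≥ 2, the function α ↦ c_k(α) is strictly decreasing on the interval [1, k], and 0 < c_k(α) ≤ 1 for all real α with 0 < α < k. -/

import Mathlib

open Finset Set

/-- `ck k α = Σ_{j ∈ ℕ, 0 ≤ j < α} (-1)^j C(k,j) (1 - j/α)^{k-1}` (empty when `α ≤ 0`). -/
noncomputable def ck (k : ℕ) (α : ℝ) : ℝ :=
  ∑ j ∈ Finset.range ⌈α⌉₊, (-1 : ℝ) ^ j * (k.choose j : ℝ) * (1 - (j : ℝ) / α) ^ (k - 1)

noncomputable def fb (m : ℕ) (x : ℝ) : ℝ :=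
  ∑ j ∈ Finset.range (m + 1), (-1 : ℝ) ^ j * (m.choose j : ℝ) * max (x - (j : ℝ)) 0 ^ (m - 1)

lemma FD : ∀ m : ℕ, ∀ i : ℕ, i < m → ∀ c : ℝ,
    ∑ j ∈ Finset.range (m + 1), (-1 : ℝ) ^ j * (m.choose j : ℝ) * (c + (j : ℝ)) ^ i = 0 := by
  intro m
  induction m with
  | zero => intro i hi; omega
  | succ m ih =>
    intro i hi c
    have key : ∀ d : ℝ, ∑ j ∈ Finset.range (m + 2), (-1:ℝ)^j * ((m+1).choose j : ℝ) * (d + (j:ℝ))^i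
        = (∑ j ∈ Finset.range (m + 1), (-1:ℝ)^j * (m.choose j : ℝ) * (d + (j:ℝ))^i)
          - ∑ j ∈ Finset.range (m + 1), (-1:ℝ)^j * (m.choose j : ℝ) * ((d+1) + (j:ℝ))^i := by
      intro d
      have hT : ∑ j ∈ Finset.range (m+1), (-1:ℝ)^j * (m.choose (j+1) : ℝ) * ((d+1) + (j:ℝ))^i
          = d ^ i - ∑ j ∈ Finset.range (m + 1), (-1:ℝ)^j * (m.choose j : ℝ) * (d + (j:ℝ))^i := by
        rw [Finset.sum_range_succ (fun j => (-1:ℝ)^j * (m.choose (j+1) : ℝ) * ((d+1) + (j:ℝ))^i)]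
        rw [Finset.sum_range_succ' (fun j => (-1:ℝ)^j * (m.choose j : ℝ) * (d + (j:ℝ))^i)]
        have h3 : (∑ j ∈ Finset.range m, (-1:ℝ)^j * (m.choose (j+1) : ℝ) * ((d+1) + (j:ℝ))^i)
            + ∑ j ∈ Finset.range m, (-1:ℝ)^(j+1) * (m.choose (j+1) : ℝ) * (d + ((j+1:ℕ):ℝ))^i = 0 := by
          rw [← Finset.sum_add_distrib]
          exact Finset.sum_eq_zero fun j _ => by push_cast; ring
        simp only [Nat.choose_succ_self, Nat.cast_zero, Nat.choose_zero_right, Nat.cast_one,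
          pow_zero, Nat.cast_zero, add_zero, one_mul, mul_zero, zero_mul]
        push_cast at h3 ⊢
        linarith [h3]
      -- now the key equality
      rw [Finset.sum_range_succ' (fun j => (-1:ℝ)^j * ((m+1).choose j : ℝ) * (d + (j:ℝ))^i)]
      have h4 : ∀ j ∈ Finset.range (m+1), (-1:ℝ)^(j+1) * (((m+1).choose (j+1) : ℕ) : ℝ) * (d + ((j+1:ℕ):ℝ))^i
          = -((-1:ℝ)^j * (m.choose j : ℝ) * ((d+1) + (j:ℝ))^i) - (-1:ℝ)^j * (m.choose (j+1) : ℝ) * ((d+1) + (j:ℝ))^i := by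
        intro j _
        rw [Nat.choose_succ_succ]
        push_cast
        ring
      rw [Finset.sum_congr rfl h4, Finset.sum_sub_distrib]
      rw [hT]
      simp only [Finset.sum_neg_distrib, Nat.choose_zero_right, Nat.cast_one, Nat.cast_zero,
        pow_zero, one_mul, add_zero]
      ring
    rw [show m + 1 + 1 = m + 2 from rfl, key c]
    rcases lt_or_eq_of_le (Nat.lt_succ_iff.mp hi) with him | him
    · rw [ih i him c, ih i him (c+1)]; ring
    · subst him
      have expand : ∀ j ∈ Finset.range (i+1), (-1:ℝ)^j * (i.choose j : ℝ) * ((c+1) + (j:ℝ))^i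
          = (-1:ℝ)^j * (i.choose j : ℝ) * (c + (j:ℝ))^i
            + ∑ l ∈ Finset.range i, ((-1:ℝ)^j * (i.choose j : ℝ)) * ((c + (j:ℝ))^l * (i.choose l : ℝ)) := by
        intro j _
        have hp : ((c + (j:ℝ)) + 1)^i = ∑ l ∈ Finset.range (i+1), (c + (j:ℝ))^l * 1^(i-l) * (i.choose l : ℝ) :=
          add_pow (c + (j:ℝ)) 1 i
        rw [Finset.sum_range_succ] at hp
        simp only [one_pow, mul_one, Nat.choose_self, Nat.cast_one] at hp
        have h5 : (c+1) + (j:ℝ) = (c + (j:ℝ)) + 1 := by ring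
        rw [h5, hp, mul_add, Finset.mul_sum, add_comm]
      rw [Finset.sum_congr rfl expand, Finset.sum_add_distrib]
      have hzero : ∑ j ∈ Finset.range (i+1), ∑ l ∈ Finset.range i,
          ((-1:ℝ)^j * (i.choose j:ℝ)) * ((c+(j:ℝ))^l * (i.choose l:ℝ)) = 0 := by
        rw [Finset.sum_comm]
        refine Finset.sum_eq_zero fun l hl => ?_
        have h0 := ih l (Finset.mem_range.mp hl) c
        have h6 : ∑ j ∈ Finset.range (i+1), ((-1:ℝ)^j * (i.choose j:ℝ)) * ((c+(j:ℝ))^l * (i.choose l:ℝ))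
            = (i.choose l : ℝ) * ∑ j ∈ Finset.range (i+1), (-1:ℝ)^j * (i.choose j:ℝ) * (c+(j:ℝ))^l := by
          rw [Finset.mul_sum]; exact Finset.sum_congr rfl fun j _ => by ring
        rw [h6, h0, mul_zero]
      rw [hzero]
      ring

lemma fb_symm (m : ℕ) (hm : 2 ≤ m) (x : ℝ) : fb m ((m:ℝ) - x) = fb m x := by
  have h0 : ∑ j ∈ Finset.range (m+1), (-1:ℝ)^j * (m.choose j : ℝ) * (x - (j:ℝ))^(m-1) = 0 := by
    have h := FD m (m-1) (by omega) (-x)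
    have h2 : ∑ j ∈ Finset.range (m+1), (-1:ℝ)^j * (m.choose j : ℝ) * (x - (j:ℝ))^(m-1)
        = (-1:ℝ)^(m-1) * ∑ j ∈ Finset.range (m+1), (-1:ℝ)^j * (m.choose j : ℝ) * ((-x) + (j:ℝ))^(m-1) := by
      rw [Finset.mul_sum]
      refine Finset.sum_congr rfl fun j _ => ?_
      have hneg : (x - (j:ℝ))^(m-1) = (-1:ℝ)^(m-1) * ((-x) + (j:ℝ))^(m-1) := by
        rw [show x - (j:ℝ) = -((-x)+(j:ℝ)) by ring, neg_pow]
      rw [hneg]; ring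
    rw [h2, h, mul_zero]
  have hsplit : ∀ t : ℝ, t^(m-1) = max t 0 ^ (m-1) + (-1:ℝ)^(m-1) * max (-t) 0 ^ (m-1) := by
    intro t
    rcases le_or_gt t 0 with ht | ht
    · have h8 : (-t)^(m-1) = (-1:ℝ)^(m-1) * t^(m-1) := neg_pow t (m-1)
      rw [max_eq_right ht, zero_pow (by omega : m - 1 ≠ 0), max_eq_left (by linarith),
        h8, zero_add, ← mul_assoc, ← pow_add,
        Even.neg_one_pow ⟨m-1, rfl⟩, one_mul]
    · rw [max_eq_left ht.le, max_eq_right (by linarith), zero_pow (by omega : m - 1 ≠ 0)]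
      ring
  have hS : ∑ j ∈ Finset.range (m+1), (-1:ℝ)^j * (m.choose j : ℝ) * max ((j:ℝ) - x) 0 ^ (m-1)
      = (-1:ℝ)^m * fb m ((m:ℝ) - x) := by
    rw [← Finset.sum_range_reflect]
    rw [fb, Finset.mul_sum]
    refine Finset.sum_congr rfl fun j hj => ?_
    have hjm : j ≤ m := by have := Finset.mem_range.mp hj; omega
    have e1 : m + 1 - 1 - j = m - j := by omega
    rw [e1, Nat.choose_symm hjm]
    have e2 : ((m - j : ℕ) : ℝ) = (m:ℝ) - (j:ℝ) := by
      push_cast [Nat.cast_sub hjm]; ring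
    have e3 : (-1:ℝ)^(m-j) = (-1:ℝ)^m * (-1:ℝ)^j := by
      have h7 : (-1:ℝ)^(m-j) * (-1:ℝ)^j = (-1:ℝ)^m := by
        rw [← pow_add]; congr 1; omega
      have hj1 : (-1:ℝ)^j * (-1:ℝ)^j = 1 := by
        rw [← pow_add]; exact Even.neg_one_pow ⟨j, rfl⟩
      calc (-1:ℝ)^(m-j) = (-1:ℝ)^(m-j) * ((-1:ℝ)^j * (-1:ℝ)^j) := by rw [hj1, mul_one]
        _ = ((-1:ℝ)^(m-j) * (-1:ℝ)^j) * (-1:ℝ)^j := by ring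
        _ = (-1:ℝ)^m * (-1:ℝ)^j := by rw [h7]
    rw [e2, e3]
    have e4 : (m:ℝ) - (j:ℝ) - x = ((m:ℝ) - x) - (j:ℝ) := by ring
    rw [e4]; ring
  have hsum : ∑ j ∈ Finset.range (m+1), (-1:ℝ)^j * (m.choose j : ℝ) * (x - (j:ℝ))^(m-1)
      = fb m x + (-1:ℝ)^(m-1) *
          ∑ j ∈ Finset.range (m+1), (-1:ℝ)^j * (m.choose j : ℝ) * max ((j:ℝ) - x) 0 ^ (m-1) := by
    rw [fb, Finset.mul_sum, ← Finset.sum_add_distrib]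
    refine Finset.sum_congr rfl fun j _ => ?_
    rw [hsplit (x - (j:ℝ)), neg_sub]
    ring
  rw [hS] at hsum
  rw [h0] at hsum
  have hodd : (-1:ℝ)^(m-1) * (-1:ℝ)^m = -1 := by
    rw [← pow_add]
    exact Odd.neg_one_pow ⟨m-1, by omega⟩
  have : (0:ℝ) = fb m x + ((-1:ℝ)^(m-1) * (-1:ℝ)^m) * fb m ((m:ℝ) - x) := by
    rw [mul_assoc] at *; linarith [hsum]
  rw [hodd] at this
  linarith

lemma hasDerivAt_maxpow (n : ℕ) (hn : 2 ≤ n) (c x : ℝ) :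
    HasDerivAt (fun y : ℝ => max (y - c) 0 ^ n) ((n : ℝ) * max (x - c) 0 ^ (n - 1)) x := by
  rcases lt_trichotomy x c with h | h | h
  · have hmax : max (x - c) 0 = 0 := max_eq_right (by linarith)
    rw [hmax, zero_pow (by omega : n - 1 ≠ 0), mul_zero]
    have hev : (fun y : ℝ => max (y - c) 0 ^ n) =ᶠ[nhds x] fun _ => (0:ℝ) := by
      filter_upwards [Iio_mem_nhds h] with y hy
      rw [max_eq_right (by simp at hy; linarith), zero_pow (by omega : n ≠ 0)]
    exact (hasDerivAt_const x (0:ℝ)).congr_of_eventuallyEq hev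
  · subst h
    have hmax : max (x - x) 0 = 0 := by simp
    rw [hmax, zero_pow (by omega : n - 1 ≠ 0), mul_zero]
    rw [hasDerivAt_iff_tendsto_slope]
    have hbound : ∀ y : ℝ, ‖slope (fun y : ℝ => max (y - x) 0 ^ n) x y‖ ≤ |y - x| ^ (n - 1) := by
      intro y
      rw [slope_def_field]
      simp only [sub_self, max_self, zero_pow (by omega : n ≠ 0), sub_zero]
      rcases le_or_gt y x with hy | hy
      · rw [max_eq_right (by linarith), zero_pow (by omega : n ≠ 0), zero_div, norm_zero]
        positivity
      · rw [max_eq_left (by linarith)]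
        have hyx : (0:ℝ) < y - x := by linarith
        rw [Real.norm_eq_abs, abs_div, abs_pow, abs_of_pos hyx, div_le_iff₀ hyx, ← pow_succ,
          (by omega : n - 1 + 1 = n)]
    apply squeeze_zero_norm hbound
    have htend : Filter.Tendsto (fun y : ℝ => |y - x| ^ (n-1)) (nhds x) (nhds 0) := by
      have h1 : Filter.Tendsto (fun y : ℝ => |y - x| ^ (n-1)) (nhds x) (nhds (|x - x| ^ (n-1))) :=
        Filter.Tendsto.pow ((continuous_abs.comp (continuous_id.sub continuous_const)).tendsto x) _
      simpa [zero_pow (by omega : n - 1 ≠ 0)] using h1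
    exact htend.mono_left nhdsWithin_le_nhds
  · have hmax : max (x - c) 0 = x - c := max_eq_left (by linarith)
    rw [hmax]
    have hd : HasDerivAt (fun y : ℝ => (y - c) ^ n) ((n:ℝ) * (x - c) ^ (n-1)) x := by
      simpa using ((hasDerivAt_id x).sub_const c).fun_pow n
    apply hd.congr_of_eventuallyEq
    filter_upwards [Ioi_mem_nhds h] with y hy
    rw [max_eq_left (by simp at hy; linarith)]

lemma fb_hasDerivAt (m : ℕ) (hm : 3 ≤ m) (x : ℝ) :
    HasDerivAt (fb m)
      (((m:ℝ) - 1) * ∑ j ∈ Finset.range (m + 1),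
        (-1:ℝ)^j * (m.choose j : ℝ) * max (x - (j:ℝ)) 0 ^ (m - 2)) x := by
  have h : ∀ j ∈ Finset.range (m+1),
      HasDerivAt (fun y : ℝ => (-1:ℝ)^j * (m.choose j : ℝ) * max (y - (j:ℝ)) 0 ^ (m-1))
        ((-1:ℝ)^j * (m.choose j : ℝ) * (((m-1:ℕ):ℝ) * max (x - (j:ℝ)) 0 ^ (m-1-1))) x :=
    fun j _ => (hasDerivAt_maxpow (m-1) (by omega) (j:ℝ) x).const_mul _
  have hsum := HasDerivAt.fun_sum h
  have : fb m = fun y => ∑ j ∈ Finset.range (m+1),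
      (-1:ℝ)^j * (m.choose j : ℝ) * max (y - (j:ℝ)) 0 ^ (m-1) := rfl
  rw [this]
  refine hsum.congr_deriv (Eq.symm ?_)
  rw [Finset.mul_sum]
  refine Finset.sum_congr rfl fun j _ => ?_
  have e1 : m - 1 - 1 = m - 2 := by omega
  have e2 : ((m-1:ℕ):ℝ) = (m:ℝ) - 1 := by
    push_cast [Nat.cast_sub (by omega : 1 ≤ m)]; ring
  rw [e1, e2]; ring

lemma Dsum_eq (m : ℕ) (hm : 2 ≤ m) (x : ℝ) :
    ∑ j ∈ Finset.range (m + 2), (-1:ℝ)^j * ((m+1).choose j : ℝ) * max (x - (j:ℝ)) 0 ^ (m - 1)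
      = fb m x - fb m (x - 1) := by
  rw [Finset.sum_range_succ' (fun j => (-1:ℝ)^j * ((m+1).choose j : ℝ) * max (x - (j:ℝ)) 0 ^ (m-1))]
  have h4 : ∀ j ∈ Finset.range (m+1),
      (-1:ℝ)^(j+1) * (((m+1).choose (j+1) : ℕ) : ℝ) * max (x - ((j+1:ℕ):ℝ)) 0 ^ (m-1)
      = -((-1:ℝ)^j * (m.choose j : ℝ) * max ((x-1) - (j:ℝ)) 0 ^ (m-1))
        - (-1:ℝ)^j * (m.choose (j+1) : ℝ) * max (x - ((j:ℝ)+1)) 0 ^ (m-1) := by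
    intro j _
    rw [Nat.choose_succ_succ]
    push_cast
    have e : x - ((j:ℝ)+1) = (x-1) - (j:ℝ) := by ring
    rw [e]; ring
  rw [Finset.sum_congr rfl h4, Finset.sum_sub_distrib, Finset.sum_neg_distrib]
  have hT : ∑ j ∈ Finset.range (m+1), (-1:ℝ)^j * (m.choose (j+1) : ℝ) * max (x - ((j:ℝ)+1)) 0 ^ (m-1)
      = max x 0 ^ (m-1) - fb m x := by
    rw [Finset.sum_range_succ (fun j => (-1:ℝ)^j * (m.choose (j+1) : ℝ) * max (x - ((j:ℝ)+1)) 0 ^ (m-1))]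
    have hfb : fb m x = (∑ j ∈ Finset.range m,
        (-1:ℝ)^(j+1) * (m.choose (j+1) : ℝ) * max (x - ((j+1:ℕ):ℝ)) 0 ^ (m-1)) + max x 0 ^ (m-1) := by
      rw [fb, Finset.sum_range_succ' (fun j => (-1:ℝ)^j * (m.choose j : ℝ) * max (x - (j:ℝ)) 0 ^ (m-1))]
      norm_num
    rw [Nat.choose_succ_self]
    push_cast
    rw [hfb]
    have : ∑ j ∈ Finset.range m, (-1:ℝ)^(j+1) * (m.choose (j+1) : ℝ) * max (x - ((j+1:ℕ):ℝ)) 0 ^ (m-1)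
        = - ∑ j ∈ Finset.range m, (-1:ℝ)^j * (m.choose (j+1) : ℝ) * max (x - ((j:ℝ)+1)) 0 ^ (m-1) := by
      rw [← Finset.sum_neg_distrib]
      refine Finset.sum_congr rfl fun j _ => ?_
      push_cast
      ring
    rw [this]
    ring
  rw [hT]
  have hfb1 : ∑ j ∈ Finset.range (m+1), (-1:ℝ)^j * (m.choose j : ℝ) * max ((x-1) - (j:ℝ)) 0 ^ (m-1)
      = fb m (x-1) := rfl
  rw [hfb1]
  norm_num
  ring

lemma idA (m : ℕ) (hm : 2 ≤ m) (x : ℝ) :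
    x * (∑ j ∈ Finset.range (m + 2), (-1:ℝ)^j * ((m+1).choose j : ℝ) * max (x - (j:ℝ)) 0 ^ (m - 1))
      - fb (m+1) x = -((m:ℝ)+1) * fb m (x - 1) := by
  have hterm : ∀ j : ℕ, x * max (x - (j:ℝ)) 0 ^ (m-1) - max (x - (j:ℝ)) 0 ^ m
      = (j:ℝ) * max (x - (j:ℝ)) 0 ^ (m-1) := by
    intro j
    rcases le_or_gt (x - (j:ℝ)) 0 with hj | hj
    · rw [max_eq_right hj, zero_pow (by omega : m - 1 ≠ 0), zero_pow (by omega : m ≠ 0)]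
      ring
    · rw [max_eq_left hj.le]
      have hp : (x - (j:ℝ))^m = (x - (j:ℝ))^(m-1) * (x - (j:ℝ)) := by
        rw [← pow_succ]; congr 1; omega
      rw [hp]; ring
  have hL : x * (∑ j ∈ Finset.range (m + 2), (-1:ℝ)^j * ((m+1).choose j : ℝ) * max (x - (j:ℝ)) 0 ^ (m - 1))
      - fb (m+1) x
      = ∑ j ∈ Finset.range (m+2), (-1:ℝ)^j * ((m+1).choose j : ℝ) * ((j:ℝ) * max (x - (j:ℝ)) 0 ^ (m-1)) := by
    rw [fb, Finset.mul_sum, ← Finset.sum_sub_distrib]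
    refine Finset.sum_congr rfl fun j _ => ?_
    have e : m + 1 - 1 = m := rfl
    rw [e, ← hterm j]
    ring
  rw [hL]
  rw [Finset.sum_range_succ' (fun j => (-1:ℝ)^j * ((m+1).choose j : ℝ) * ((j:ℝ) * max (x - (j:ℝ)) 0 ^ (m-1)))]
  have h9 : ∀ j ∈ Finset.range (m+1),
      (-1:ℝ)^(j+1) * ((m+1).choose (j+1) : ℝ) * (((j+1:ℕ):ℝ) * max (x - ((j+1:ℕ):ℝ)) 0 ^ (m-1))
      = -((m:ℝ)+1) * ((-1:ℝ)^j * (m.choose j : ℝ) * max ((x-1) - (j:ℝ)) 0 ^ (m-1)) := by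
    intro j _
    have hc : ((m+1).choose (j+1) * (j+1) : ℕ) = (m+1) * m.choose j := by
      rw [← Nat.add_one_mul_choose_eq]
    have hc' : (((m+1).choose (j+1) : ℕ) : ℝ) * ((j:ℝ)+1) = ((m:ℝ)+1) * (m.choose j : ℝ) := by
      have := congrArg (fun n : ℕ => (n : ℝ)) hc
      push_cast at this
      linarith [this]
    have e : x - ((j:ℝ)+1) = (x-1) - (j:ℝ) := by ring
    push_cast
    rw [e]
    calc (-1:ℝ)^(j+1) * ((m+1).choose (j+1) : ℝ) * (((j:ℝ)+1) * max ((x-1) - (j:ℝ)) 0 ^ (m-1))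
        = -((-1:ℝ)^j * (((m+1).choose (j+1) : ℝ) * ((j:ℝ)+1)) * max ((x-1) - (j:ℝ)) 0 ^ (m-1)) := by
          rw [pow_succ]; ring
      _ = -((-1:ℝ)^j * (((m:ℝ)+1) * (m.choose j : ℝ)) * max ((x-1) - (j:ℝ)) 0 ^ (m-1)) := by
          rw [hc']
      _ = -((m:ℝ)+1) * ((-1:ℝ)^j * (m.choose j : ℝ) * max ((x-1) - (j:ℝ)) 0 ^ (m-1)) := by ring
  rw [Finset.sum_congr rfl h9, ← Finset.mul_sum]
  have hfb1 : ∑ j ∈ Finset.range (m+1), (-1:ℝ)^j * (m.choose j : ℝ) * max ((x-1) - (j:ℝ)) 0 ^ (m-1)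
      = fb m (x-1) := rfl
  rw [hfb1]
  norm_num

lemma fb_of_nonpos {m : ℕ} (hm : 2 ≤ m) {x : ℝ} (hx : x ≤ 0) : fb m x = 0 := by
  refine Finset.sum_eq_zero fun j _ => ?_
  have hj : max (x - (j : ℝ)) 0 = 0 :=
    max_eq_right (by have : (0:ℝ) ≤ j := Nat.cast_nonneg j; linarith)
  rw [hj, zero_pow (by omega : m - 1 ≠ 0), mul_zero]

lemma fb_pos_of_mono {m : ℕ} (hm : 2 ≤ m)
    (hmono : StrictMonoOn (fb m) (Set.Icc 0 ((m:ℝ)/2))) :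
    ∀ x : ℝ, 0 < x → x < m → 0 < fb m x := by
  have hm2 : (0:ℝ) ≤ (m:ℝ)/2 := by positivity
  have base : ∀ x : ℝ, 0 < x → x ≤ (m:ℝ)/2 → 0 < fb m x := by
    intro x hx0 hxm
    have := hmono (Set.mem_Icc.mpr ⟨le_rfl, hm2⟩) (Set.mem_Icc.mpr ⟨hx0.le, hxm⟩) hx0
    rwa [fb_of_nonpos hm le_rfl] at this
  intro x hx0 hxm
  rcases le_or_gt x ((m:ℝ)/2) with h | h
  · exact base x hx0 h
  · have h1 : 0 < (m:ℝ) - x := by linarith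
    have h2 : (m:ℝ) - x ≤ (m:ℝ)/2 := by linarith
    have := base ((m:ℝ) - x) h1 h2
    rwa [fb_symm m hm x] at this

lemma fb_mono : ∀ m : ℕ, 2 ≤ m → StrictMonoOn (fb m) (Set.Icc 0 ((m:ℝ)/2)) := by
  intro m hm
  induction m, hm using Nat.le_induction with
  | base =>
    have key : ∀ x ∈ Set.Icc (0:ℝ) (((2:ℕ):ℝ)/2), fb 2 x = x := by
      intro x hx
      rw [show (((2:ℕ):ℝ)/2) = 1 by norm_num] at hx
      obtain ⟨h0, h1⟩ := hx
      rw [fb, Finset.sum_range_succ, Finset.sum_range_succ, Finset.sum_range_one]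
      norm_num
      rw [max_eq_left h0, max_eq_right (by linarith), max_eq_right (by linarith)]
      ring
    intro a ha b hb hab
    rw [key a ha, key b hb]
    exact hab
  | succ m hm ih =>
    have hpos := fb_pos_of_mono hm ih
    have hdiff : ∀ x : ℝ, HasDerivAt (fb (m+1)) (((m:ℝ)+1-1) * (fb m x - fb m (x-1))) x := by
      intro x
      have h := fb_hasDerivAt (m+1) (by omega) x
      rwa [show (m+1) - 2 = m - 1 from rfl, Dsum_eq m hm x, Nat.cast_add, Nat.cast_one] at h
    apply strictMonoOn_of_deriv_pos (convex_Icc _ _)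
    · exact (Differentiable.continuous fun x => (hdiff x).differentiableAt).continuousOn
    · intro x hx
      rw [interior_Icc, Set.mem_Ioo] at hx
      rw [(hdiff x).deriv]
      have hkey : fb m (x - 1) < fb m x := by
        rcases le_or_gt x 1 with h1 | h1
        · rw [fb_of_nonpos hm (by linarith : x - 1 ≤ 0)]
          exact hpos x hx.1 (by
            have : (2:ℝ) ≤ (m:ℝ) := by exact_mod_cast hm
            linarith)
        · have hx1 : (0:ℝ) ≤ x - 1 := by linarith
          have hcast : ((m+1:ℕ):ℝ) = (m:ℝ) + 1 := by push_cast; ring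
          rw [hcast] at hx
          rcases le_or_gt x ((m:ℝ)/2) with h2 | h2
          · exact ih (Set.mem_Icc.mpr ⟨hx1, by linarith⟩)
              (Set.mem_Icc.mpr ⟨by linarith, h2⟩) (by linarith)
          · have hsym : fb m ((m:ℝ) - x) = fb m x := fb_symm m hm x
            rw [← hsym]
            exact ih (Set.mem_Icc.mpr ⟨hx1, by linarith⟩)
              (Set.mem_Icc.mpr ⟨by linarith, by linarith⟩) (by linarith)
      have hm1 : (0:ℝ) < (m:ℝ) + 1 - 1 := by
        have : (2:ℝ) ≤ (m:ℝ) := by exact_mod_cast hm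
        linarith
      exact mul_pos hm1 (by linarith)

lemma fb_pos {m : ℕ} (hm : 2 ≤ m) : ∀ x : ℝ, 0 < x → x < m → 0 < fb m x :=
  fb_pos_of_mono hm (fb_mono m hm)

lemma ck_eq (k : ℕ) (hk : 2 ≤ k) (α : ℝ) (h0 : 0 < α) (hαk : α ≤ k) :
    ck k α = fb k α / α^(k-1) := by
  have hceil : ⌈α⌉₊ ≤ k := Nat.ceil_le.mpr hαk
  have hsub : Finset.range ⌈α⌉₊ ⊆ Finset.range (k+1) :=
    Finset.range_subset_range.mpr (by omega)
  have hvanish : ∀ j ∈ Finset.range (k+1), j ∉ Finset.range ⌈α⌉₊ →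
      (-1:ℝ)^j * (k.choose j : ℝ) * max (α - (j:ℝ)) 0 ^ (k-1) = 0 := by
    intro j _ hj
    have : α ≤ (j:ℝ) := by
      by_contra hc
      exact hj (Finset.mem_range.mpr (Nat.lt_ceil.mpr (lt_of_not_ge hc)))
    rw [max_eq_right (by linarith), zero_pow (by omega : k - 1 ≠ 0), mul_zero]
  have h1 : ∑ j ∈ Finset.range ⌈α⌉₊, (-1:ℝ)^j * (k.choose j : ℝ) * max (α - (j:ℝ)) 0 ^ (k-1)
      = fb k α := Finset.sum_subset hsub hvanish
  rw [ck, ← h1, Finset.sum_div]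
  refine Finset.sum_congr rfl fun j hj => ?_
  have hjα : (j:ℝ) < α := Nat.lt_ceil.mp (Finset.mem_range.mp hj)
  rw [max_eq_left (by linarith)]
  rw [show (1 : ℝ) - (j:ℝ)/α = (α - (j:ℝ))/α by field_simp]
  rw [div_pow, mul_div_assoc]

lemma ck_of_le_one (k : ℕ) {α : ℝ} (h0 : 0 < α) (h1 : α ≤ 1) : ck k α = 1 := by
  have hc : ⌈α⌉₊ = 1 :=
    le_antisymm (Nat.ceil_le.mpr (by exact_mod_cast h1)) (Nat.one_le_ceil_iff.mpr h0)
  rw [ck, hc, Finset.sum_range_one]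
  simp

/-- For `k ≥ 2`, `c_k` is strictly decreasing on `[1, k]`, and `0 < c_k(α) ≤ 1` for
`0 < α < k`. -/
theorem ck_strictAnti_and_pos (k : ℕ) (hk : 2 ≤ k) :
    StrictAntiOn (fun α : ℝ => ck k α) (Set.Icc (1 : ℝ) (k : ℝ)) ∧
    ∀ α : ℝ, 0 < α → α < (k : ℝ) → 0 < ck k α ∧ ck k α ≤ 1 := by
  rcases eq_or_lt_of_le hk with hk2 | hk3
  · -- k = 2
    subst hk2
    have hck : ∀ x : ℝ, 1 ≤ x → x ≤ 2 → ck 2 x = 2/x - 1 := by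
      intro x hx1 hx2
      rcases eq_or_lt_of_le hx1 with rfl | hx1'
      · rw [ck_of_le_one 2 one_pos le_rfl]; norm_num
      · have hc : ⌈x⌉₊ = 2 := by
          refine le_antisymm (Nat.ceil_le.mpr (by exact_mod_cast hx2)) ?_
          exact_mod_cast Nat.add_one_le_ceil_iff.mpr (by exact_mod_cast hx1')
        have hx0 : x ≠ 0 := by linarith
        rw [ck, hc, Finset.sum_range_succ, Finset.sum_range_one]
        norm_num
        field_simp
        ring
    constructor
    · intro a ha b hb hab
      rw [Set.mem_Icc] at ha hb
      have h2 : ((2:ℕ):ℝ) = 2 := by norm_num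
      rw [h2] at ha hb
      simp only []
      rw [hck a ha.1 ha.2, hck b hb.1 hb.2]
      have ha0 : 0 < a := by linarith
      have : 2/b < 2/a := div_lt_div_of_pos_left (by norm_num) ha0 hab
      linarith
    · intro α h0 h2
      rw [show ((2:ℕ):ℝ) = 2 by norm_num] at h2
      rcases le_or_gt α 1 with h1 | h1
      · rw [ck_of_le_one 2 h0 h1]; norm_num
      · rw [hck α h1.le h2.le]
        have hA : 1 < 2/α := by rw [lt_div_iff₀ h0]; linarith
        have hB : 2/α ≤ 2 := by rw [div_le_iff₀ h0]; linarith
        constructor <;> linarith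
  · -- k ≥ 3
    obtain ⟨m, rfl⟩ : ∃ m, k = m + 1 := ⟨k - 1, by omega⟩
    have hm : 2 ≤ m := by omega
    have hmR : (2:ℝ) ≤ (m:ℝ) := by exact_mod_cast hm
    set g : ℝ → ℝ := fun α => fb (m+1) α / α^m with hg
    have hdiff : ∀ x : ℝ, 0 < x → HasDerivAt g
        ((((↑(m+1):ℝ) - 1) * (∑ j ∈ Finset.range (m + 2),
            (-1:ℝ)^j * ((m+1).choose j : ℝ) * max (x - (j:ℝ)) 0 ^ (m - 1)) * x^m
          - fb (m+1) x * ((m:ℝ) * x^(m-1))) / (x^m)^2) x := by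
      intro x hx
      exact (fb_hasDerivAt (m+1) (by omega) x).div (hasDerivAt_pow m x)
        (pow_ne_zero m (ne_of_gt hx))
    have hderivneg : ∀ x : ℝ, 1 < x → x < (m:ℝ)+1 → deriv g x < 0 := by
      intro x hx1 hxm
      have hx0 : (0:ℝ) < x := by linarith
      rw [(hdiff x hx0).deriv]
      apply div_neg_of_neg_of_pos
      · have hA := idA m hm x
        have hfpos : 0 < fb m (x - 1) := fb_pos hm (x-1) (by linarith) (by linarith)
        have hxpow : x^m = x^(m-1) * x := by
          rw [← pow_succ]; congr 1; omega
        have hxp : (0:ℝ) < x^(m-1) := pow_pos hx0 _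
        have hcast : ((↑(m+1):ℝ) - 1) = (m:ℝ) := by push_cast; ring
        rw [hcast, hxpow]
        set S := ∑ j ∈ Finset.range (m + 2),
            (-1:ℝ)^j * ((m+1).choose j : ℝ) * max (x - (j:ℝ)) 0 ^ (m - 1) with hS
        have : (m:ℝ) * S * (x^(m-1) * x) - fb (m+1) x * ((m:ℝ) * x^(m-1))
            = (m:ℝ) * x^(m-1) * (x * S - fb (m+1) x) := by ring
        rw [this, hA]
        have : (0:ℝ) < (m:ℝ) * x^(m-1) * (((m:ℝ)+1) * fb m (x-1)) := by positivity
        nlinarith [this]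
      · positivity
    have hcontfb : Continuous (fb (m+1)) :=
      Differentiable.continuous fun x => (fb_hasDerivAt (m+1) (by omega) x).differentiableAt
    have hanti : StrictAntiOn g (Set.Icc 1 ((↑(m+1):ℝ))) := by
      apply strictAntiOn_of_deriv_neg (convex_Icc _ _)
      · exact ContinuousOn.div hcontfb.continuousOn (continuous_pow m).continuousOn
          (fun x hx => pow_ne_zero m (by rw [Set.mem_Icc] at hx; intro h; rw [h] at hx; linarith [hx.1]))
      · intro x hx
        rw [interior_Icc, Set.mem_Ioo] at hx
        exact hderivneg x hx.1 (by push_cast at hx ⊢; linarith [hx.2])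
    have heq : ∀ α ∈ Set.Icc (1:ℝ) ((↑(m+1):ℝ)), ck (m+1) α = g α := by
      intro α hα
      rw [Set.mem_Icc] at hα
      exact ck_eq (m+1) (by omega) α (by linarith) hα.2
    have hk1 : (1:ℝ) ≤ ((↑(m+1):ℝ)) := by push_cast; linarith
    constructor
    · intro a ha b hb hab
      simp only []
      rw [heq a ha, heq b hb]
      exact hanti ha hb hab
    · intro α h0 hαk
      have hαk' : α ≤ ((↑(m+1):ℝ)) := hαk.le
      have hckeq : ck (m+1) α = fb (m+1) α / α^m := ck_eq (m+1) (by omega) α h0 hαk'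
      constructor
      · rw [hckeq]
        apply div_pos
        · exact fb_pos (by omega : 2 ≤ m + 1) α h0 (by push_cast at hαk ⊢; linarith)
        · positivity
      · rcases le_or_gt α 1 with h1 | h1
        · rw [ck_of_le_one _ h0 h1]
        · have hmem1 : (1:ℝ) ∈ Set.Icc (1:ℝ) ((↑(m+1):ℝ)) := Set.mem_Icc.mpr ⟨le_rfl, hk1⟩
          have hmemα : α ∈ Set.Icc (1:ℝ) ((↑(m+1):ℝ)) := Set.mem_Icc.mpr ⟨h1.le, hαk'⟩
          have := hanti hmem1 hmemα h1
          rw [← heq 1 hmem1, ← heq α hmemα] at this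
          rw [ck_of_le_one _ one_pos le_rfl] at this
          linarith
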